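/- Let M ∈ ℝ^{f×f}, Δw ∈ ℝ^f, and let A be an f×k random matrix whose entries are independent, mean zero, variance 1/k, with fourth moment E[a_{ij}⁴] = 3/k². Let v = M·A·Aᵀ·Δw. Then the covariance matrix of v is Cov(v) = (1/k)·(M·Δw)(M·Δw)ᵀ + (1/k)·(M·Mᵀ)·‖Δw‖². -/

import Mathlib

open MeasureTheory ProbabilityTheory Matrix
open scoped ENNReal

set_option linter.unusedSectionVars false
set_option maxHeartbeats 1000000


section Aux
variable {Ω : Type*} [MeasureSpace Ω] [IsProbabilityMeasure (volume : Measure Ω)]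

lemma memLp2_mul {g h : Ω → ℝ} (hg : MemLp g 4 volume) (hh : MemLp h 4 volume) :
    MemLp (fun ω => g ω * h ω) 2 volume := by
  refine (?_ : MemLp (g • h) 2 volume)
  exact hh.smul hg (hpqr := ⟨by
    refine (ENNReal.toReal_eq_toReal_iff' (by simp) (by simp)).mp ?_
    simp [ENNReal.toReal_add, ENNReal.toReal_inv]
    norm_num⟩)

lemma integrable_mul2 {g h : Ω → ℝ} (hg : MemLp g 4 volume) (hh : MemLp h 4 volume) :
    Integrable (fun ω => g ω * h ω) volume :=
  (memLp2_mul hg hh).integrable one_le_two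

lemma integrable_mul4 {g h u w : Ω → ℝ} (hg : MemLp g 4 volume) (hh : MemLp h 4 volume)
    (hu : MemLp u 4 volume) (hw : MemLp w 4 volume) :
    Integrable (fun ω => g ω * h ω * (u ω * w ω)) volume := by
  have h2 : MemLp ((fun ω => g ω * h ω) • (fun ω => u ω * w ω)) 1 volume :=
    (memLp2_mul hu hw).smul (memLp2_mul hg hh) (hpqr := ⟨by
      refine (ENNReal.toReal_eq_toReal_iff' (by simp) (by simp)).mp ?_
      simp [ENNReal.toReal_add, ENNReal.toReal_inv]
      norm_num⟩)
  exact h2.integrable le_rfl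

lemma integrable_mul3 {g h u : Ω → ℝ} (hg : MemLp g 4 volume) (hh : MemLp h 4 volume)
    (hu : MemLp u 4 volume) :
    Integrable (fun ω => g ω * h ω * u ω) volume := by
  have h1 : MemLp ((fun ω => g ω * h ω) • u) (4/3) volume :=
    hu.smul (memLp2_mul hg hh) (hpqr := ⟨by
      refine (ENNReal.toReal_eq_toReal_iff' (by simp) ?_).mp ?_
      · simp [ENNReal.div_eq_top]
      · simp [ENNReal.toReal_add, ENNReal.toReal_inv, ENNReal.toReal_div]
        norm_num⟩)
  exact h1.integrable (by
    rw [ENNReal.le_div_iff_mul_le (by norm_num) (by norm_num)]; norm_num)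

variable {ι : Type*} {X : ι → Ω → ℝ}
  (hm : ∀ i, Measurable (X i)) (h4 : ∀ i, MemLp (X i) 4 volume)
  (hind : iIndepFun X volume)
  (hmean : ∀ i, ∫ ω, X i ω = 0)

include hm h4 hind hmean

lemma Lpair {i j : ι} (hij : i ≠ j) : ∫ ω, X i ω * X j ω = 0 := by
  have h := (hind.indepFun hij).integral_mul_eq_mul_integral
    ((h4 i).integrable (by norm_num)).aestronglyMeasurable ((h4 j).integrable (by norm_num)).aestronglyMeasurable
  rw [hmean i, zero_mul] at h
  exact h

lemma L22 {i j : ι} (hij : i ≠ j) :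
    ∫ ω, X i ω * X j ω * (X i ω * X j ω)
      = (∫ ω, X i ω * X i ω) * (∫ ω, X j ω * X j ω) := by
  have hindep2 : IndepFun (fun ω => X i ω * X i ω) (fun ω => X j ω * X j ω) volume :=
    (hind.indepFun hij).comp (measurable_id.mul measurable_id)
      (measurable_id.mul measurable_id)
  have h := hindep2.integral_mul_eq_mul_integral
    (integrable_mul2 (h4 i) (h4 i)).aestronglyMeasurable (integrable_mul2 (h4 j) (h4 j)).aestronglyMeasurable
  calc ∫ ω, X i ω * X j ω * (X i ω * X j ω)
      = ∫ ω, X i ω * X i ω * (X j ω * X j ω) := by congr 1; funext ω; ring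
    _ = _ := h

lemma L31 {i j : ι} (hij : i ≠ j) :
    ∫ ω, X i ω * X i ω * (X i ω * X j ω) = 0 := by
  have hindep2 : IndepFun (fun ω => X i ω * X i ω * X i ω) (X j) volume :=
    (hind.indepFun hij).comp ((measurable_id.mul measurable_id).mul measurable_id)
      measurable_id
  have h := hindep2.integral_mul_eq_mul_integral
    (integrable_mul3 (h4 i) (h4 i) (h4 i)).aestronglyMeasurable ((h4 j).integrable (by norm_num)).aestronglyMeasurable
  rw [hmean j, mul_zero] at h
  calc ∫ ω, X i ω * X i ω * (X i ω * X j ω)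
      = ∫ ω, X i ω * X i ω * X i ω * X j ω := by congr 1; funext ω; ring
    _ = 0 := h

lemma L211 {i j l : ι} (hij : i ≠ j) (hil : i ≠ l) (hjl : j ≠ l) :
    ∫ ω, X i ω * X i ω * (X j ω * X l ω) = 0 := by
  have hp : IndepFun (fun ω => (X i ω, X j ω)) (X l) volume :=
    hind.indepFun_prodMk hm i j l hil hjl
  have hindep2 : IndepFun (fun ω => X i ω * X i ω * X j ω) (X l) volume :=
    hp.comp ((measurable_fst.mul measurable_fst).mul measurable_snd) measurable_id
  have h := hindep2.integral_mul_eq_mul_integral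
    (integrable_mul3 (h4 i) (h4 i) (h4 j)).aestronglyMeasurable ((h4 l).integrable (by norm_num)).aestronglyMeasurable
  rw [hmean l, mul_zero] at h
  calc ∫ ω, X i ω * X i ω * (X j ω * X l ω)
      = ∫ ω, X i ω * X i ω * X j ω * X l ω := by congr 1; funext ω; ring
    _ = 0 := h

lemma Lcross {i j l r : ι} (hil : i ≠ l) (hir : i ≠ r) (hjl : j ≠ l) (hjr : j ≠ r) :
    ∫ ω, X i ω * X j ω * (X l ω * X r ω)
      = (∫ ω, X i ω * X j ω) * (∫ ω, X l ω * X r ω) := by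
  have h := (hind.indepFun_mul_mul hm i j l r hil hir hjl hjr).integral_mul_eq_mul_integral
    (integrable_mul2 (h4 i) (h4 j)).aestronglyMeasurable (integrable_mul2 (h4 l) (h4 r)).aestronglyMeasurable
  exact h

end Aux

section Moments
variable {Ω : Type*} [MeasureSpace Ω] [IsProbabilityMeasure (volume : Measure Ω)]

variable {f k : ℕ}
  (A : Ω → Matrix (Fin f) (Fin k) ℝ)
  (hmeas : ∀ i j, Measurable (fun ω => A ω i j))
  (hindep : iIndepFun
    (fun (p : Fin f × Fin k) ω => A ω p.1 p.2) volume)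
  (hmean : ∀ i j, ∫ ω, A ω i j = 0)
  (hvar : ∀ i j, ∫ ω, (A ω i j) ^ 2 = 1 / k)
  (hfourth : ∀ i j, ∫ ω, (A ω i j) ^ 4 = 3 / (k : ℝ) ^ 2)
  (hL4 : ∀ i j, MemLp (fun ω => A ω i j) 4 volume)

include hmeas hindep hmean hvar hL4

lemma moment2 (p q : Fin f) (c : Fin k) :
    ∫ ω, A ω p c * A ω q c = if p = q then 1/(k:ℝ) else 0 := by
  by_cases hpq : p = q
  · subst hpq
    rw [if_pos rfl]
    simpa [pow_two] using hvar p c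
  · rw [if_neg hpq]
    exact Lpair (fun x => hmeas x.1 x.2) (fun x => hL4 x.1 x.2) hindep
      (fun x => hmean x.1 x.2) (i := (p,c)) (j := (q,c))
      (fun h => hpq (congrArg Prod.fst h))

include hfourth

lemma moment4 (p q p' q' : Fin f) (c c' : Fin k) :
    ∫ ω, A ω p c * A ω q c * (A ω p' c' * A ω q' c') =
      1/(k:ℝ)^2 * ((if p = q then 1 else 0) * (if p' = q' then 1 else 0)
        + (if c = c' then 1 else 0) * ((if p = p' then 1 else 0) * (if q = q' then 1 else 0)
          + (if p = q' then 1 else 0) * (if q = p' then 1 else 0))) := by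
  have hm : ∀ x : Fin f × Fin k, Measurable ((fun (x : Fin f × Fin k) ω => A ω x.1 x.2) x) :=
    fun x => hmeas x.1 x.2
  have h4 : ∀ x : Fin f × Fin k, MemLp ((fun (x : Fin f × Fin k) ω => A ω x.1 x.2) x) 4 volume :=
    fun x => hL4 x.1 x.2
  have hmn : ∀ x : Fin f × Fin k, ∫ ω, A ω x.1 x.2 = 0 := fun x => hmean x.1 x.2
  have pne : ∀ (a b : Fin f) (u w : Fin k), a ≠ b → ((a,u) : Fin f × Fin k) ≠ (b,w) :=
    fun a b u w h hh => h (congrArg Prod.fst hh)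
  have cne : ∀ (a b : Fin f) (u w : Fin k), u ≠ w → ((a,u) : Fin f × Fin k) ≠ (b,w) :=
    fun a b u w h hh => h (congrArg Prod.snd hh)
  have hv2 : ∀ (a : Fin f) (u : Fin k), ∫ ω, A ω a u * A ω a u = 1/(k:ℝ) :=
    fun a u => by simpa [pow_two] using hvar a u
  by_cases hcc : c = c'
  · subst hcc
    rw [if_pos rfl]
    by_cases h1 : p = q
    · subst h1
      by_cases h2 : p' = q'
      · subst h2
        by_cases h3 : p = p'
        · subst h3
          have e : ∫ ω, A ω p c * A ω p c * (A ω p c * A ω p c) = ∫ ω, (A ω p c)^4 := by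
            congr 1; funext ω; ring
          rw [e, hfourth p c]
          simp; ring
        · have e : ∫ ω, A ω p c * A ω p c * (A ω p' c * A ω p' c)
              = ∫ ω, A ω p c * A ω p' c * (A ω p c * A ω p' c) := by congr 1; funext ω; ring
          rw [e, L22 hm h4 hindep hmn (i := (p,c)) (j := (p',c)) (pne _ _ _ _ h3),
            hv2 p c, hv2 p' c]
          simp [h3]; ring
      · by_cases h3 : p = p'
        · subst h3
          rw [L31 hm h4 hindep hmn (i := (p,c)) (j := (q',c)) (pne _ _ _ _ h2)]
          simp [h2]
        · by_cases h4' : p = q'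
          · subst h4'
            have e : ∫ ω, A ω p c * A ω p c * (A ω p' c * A ω p c)
                = ∫ ω, A ω p c * A ω p c * (A ω p c * A ω p' c) := by congr 1; funext ω; ring
            rw [e, L31 hm h4 hindep hmn (i := (p,c)) (j := (p',c)) (pne _ _ _ _ h3)]
            have h3' : p' ≠ p := fun h => h3 h.symm
            simp [h3, h3', h2]
          · rw [L211 hm h4 hindep hmn (i := (p,c)) (j := (p',c)) (l := (q',c))
              (pne _ _ _ _ h3) (pne _ _ _ _ h4') (pne _ _ _ _ h2)]
            simp [h3, h4', h2]
    · by_cases h2 : p' = q'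
      · subst h2
        by_cases h3 : p' = p
        · subst h3
          have e : ∫ ω, A ω p' c * A ω q c * (A ω p' c * A ω p' c)
              = ∫ ω, A ω p' c * A ω p' c * (A ω p' c * A ω q c) := by congr 1; funext ω; ring
          have h1' : p' ≠ q := h1
          have h1'' : q ≠ p' := fun h => h1 h.symm
          rw [e, L31 hm h4 hindep hmn (i := (p',c)) (j := (q,c)) (pne _ _ _ _ h1')]
          simp [h1', h1'']
        · by_cases h4' : p' = q
          · subst h4'
            have e : ∫ ω, A ω p c * A ω p' c * (A ω p' c * A ω p' c)
                = ∫ ω, A ω p' c * A ω p' c * (A ω p' c * A ω p c) := by congr 1; funext ω; ring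
            rw [e, L31 hm h4 hindep hmn (i := (p',c)) (j := (p,c)) (pne _ _ _ _ h3)]
            have h3' : p ≠ p' := fun h => h3 h.symm
            simp [h1, h3, h3']
          · have e : ∫ ω, A ω p c * A ω q c * (A ω p' c * A ω p' c)
                = ∫ ω, A ω p' c * A ω p' c * (A ω p c * A ω q c) := by congr 1; funext ω; ring
            rw [e, L211 hm h4 hindep hmn (i := (p',c)) (j := (p,c)) (l := (q,c))
              (pne _ _ _ _ h3) (pne _ _ _ _ h4') (pne _ _ _ _ h1)]
            have h3' : p ≠ p' := fun h => h3 h.symm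
            have h4'' : q ≠ p' := fun h => h4' h.symm
            simp [h1, h3', h4'']
      · by_cases hA : p = p'
        · subst hA
          by_cases hB : q = q'
          · subst hB
            rw [L22 hm h4 hindep hmn (i := (p,c)) (j := (q,c)) (pne _ _ _ _ h1),
              hv2 p c, hv2 q c]
            simp [h1, h2]; ring
          · have e : ∫ ω, A ω p c * A ω q c * (A ω p c * A ω q' c)
                = ∫ ω, A ω p c * A ω p c * (A ω q c * A ω q' c) := by congr 1; funext ω; ring
            rw [e, L211 hm h4 hindep hmn (i := (p,c)) (j := (q,c)) (l := (q',c))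
              (pne _ _ _ _ h1) (pne _ _ _ _ h2) (pne _ _ _ _ hB)]
            simp [h1, hB, h2]
        · by_cases hB : q = q'
          · subst hB
            have e : ∫ ω, A ω p c * A ω q c * (A ω p' c * A ω q c)
                = ∫ ω, A ω q c * A ω q c * (A ω p c * A ω p' c) := by congr 1; funext ω; ring
            have hqp' : q ≠ p' := fun h => h2 ((h.symm : p' = q))
            rw [e, L211 hm h4 hindep hmn (i := (q,c)) (j := (p,c)) (l := (p',c))
              (pne _ _ _ _ (fun h => h1 h.symm)) (pne _ _ _ _ hqp') (pne _ _ _ _ hA)]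
            simp [h1, hA, hqp']
          · by_cases hC : p = q'
            · subst hC
              by_cases hD : q = p'
              · subst hD
                have e : ∫ ω, A ω p c * A ω q c * (A ω q c * A ω p c)
                    = ∫ ω, A ω p c * A ω q c * (A ω p c * A ω q c) := by congr 1; funext ω; ring
                rw [e, L22 hm h4 hindep hmn (i := (p,c)) (j := (q,c)) (pne _ _ _ _ h1),
                  hv2 p c, hv2 q c]
                simp [h1, hA]; ring
              · have e : ∫ ω, A ω p c * A ω q c * (A ω p' c * A ω p c)
                    = ∫ ω, A ω p c * A ω p c * (A ω q c * A ω p' c) := by congr 1; funext ω; ring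
                rw [e, L211 hm h4 hindep hmn (i := (p,c)) (j := (q,c)) (l := (p',c))
                  (pne _ _ _ _ h1) (pne _ _ _ _ hA) (pne _ _ _ _ hD)]
                simp [h1, hA, hD]
            · by_cases hD : q = p'
              · subst hD
                have e : ∫ ω, A ω p c * A ω q c * (A ω q c * A ω q' c)
                    = ∫ ω, A ω q c * A ω q c * (A ω p c * A ω q' c) := by congr 1; funext ω; ring
                rw [e, L211 hm h4 hindep hmn (i := (q,c)) (j := (p,c)) (l := (q',c))
                  (pne _ _ _ _ (fun h => h1 h.symm)) (pne _ _ _ _ h2) (pne _ _ _ _ hC)]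
                simp [h1, hB, hC]
              · rw [Lcross hm h4 hindep hmn (i := (p,c)) (j := (q,c)) (l := (p',c)) (r := (q',c))
                  (pne _ _ _ _ hA) (pne _ _ _ _ hC) (pne _ _ _ _ hD) (pne _ _ _ _ hB)]
                rw [show (∫ ω, A ω p c * A ω q c) = 0 from
                  Lpair hm h4 hindep hmn (pne _ _ _ _ h1)]
                simp [h1, hA, hB, hC, hD]
  · rw [Lcross hm h4 hindep hmn (i := (p,c)) (j := (q,c)) (l := (p',c')) (r := (q',c'))
      (cne _ _ _ _ hcc) (cne _ _ _ _ hcc) (cne _ _ _ _ hcc) (cne _ _ _ _ hcc)]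
    rw [moment2 A hmeas hindep hmean hvar hL4 p q c,
      moment2 A hmeas hindep hmean hvar hL4 p' q' c']
    by_cases h1 : p = q <;> by_cases h2 : p' = q' <;> simp [h1, h2, hcc] <;> ring
end Moments

lemma sum_ite_const {γ : Type*} [Fintype γ] (c : Prop) [Decidable c] (F : γ → ℝ) :
    (∑ x : γ, if c then F x else 0) = if c then ∑ x, F x else 0 := by
  split <;> simp

lemma sum6 {f k : ℕ} (hk : 0 < k) (a b w : Fin f → ℝ) :
    (∑ p, ∑ q, ∑ c : Fin k, ∑ p', ∑ q', ∑ c' : Fin k,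
      a p * w q * (b p' * w q') *
        (1/(k:ℝ)^2 * ((if p = q then (1:ℝ) else 0) * (if p' = q' then 1 else 0)
          + (if c = c' then (1:ℝ) else 0) * ((if p = p' then (1:ℝ) else 0) * (if q = q' then 1 else 0)
            + (if p = q' then (1:ℝ) else 0) * (if q = p' then 1 else 0)))))
    = (∑ p, a p * w p) * (∑ p, b p * w p)
      + 1/k * ((∑ p, a p * w p) * (∑ p, b p * w p))
      + 1/k * (∑ p, a p * b p) * (∑ q, w q ^ 2) := by
  have hkR : (k:ℝ) ≠ 0 := Nat.cast_ne_zero.mpr hk.ne'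
  have swap : ∀ G : Fin k → Fin f → Fin f → Fin k → ℝ,
      (∑ c, ∑ p', ∑ q', ∑ c', G c p' q' c') = ∑ p', ∑ q', ∑ c, ∑ c', G c p' q' c' := by
    intro G
    rw [Finset.sum_comm]
    exact Finset.sum_congr rfl fun p' _ => Finset.sum_comm
  have hcc : ∀ (u t1 t2 : ℝ),
      (∑ c : Fin k, ∑ c' : Fin k, u * (t1 + (if c = c' then (1:ℝ) else 0) * t2))
        = u * ((k:ℝ)^2 * t1 + k * t2) := by
    intro u t1 t2
    simp only [mul_add, Finset.sum_add_distrib, mul_ite, ite_mul, mul_zero, zero_mul,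
      mul_one, one_mul, Finset.sum_ite_eq, Finset.sum_ite_eq', Finset.mem_univ, if_true,
      Finset.sum_const, Finset.card_univ, Fintype.card_fin, nsmul_eq_mul]
    ring
  calc ∑ p, ∑ q, ∑ c : Fin k, ∑ p', ∑ q', ∑ c' : Fin k,
      a p * w q * (b p' * w q') *
        (1/(k:ℝ)^2 * ((if p = q then (1:ℝ) else 0) * (if p' = q' then 1 else 0)
          + (if c = c' then (1:ℝ) else 0) * ((if p = p' then (1:ℝ) else 0) * (if q = q' then 1 else 0)
            + (if p = q' then (1:ℝ) else 0) * (if q = p' then 1 else 0))))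
      = ∑ p, ∑ q, ∑ p', ∑ q', ∑ c : Fin k, ∑ c' : Fin k,
          (a p * w q * (b p' * w q') * (1/(k:ℝ)^2)) *
            ((if p = q then (1:ℝ) else 0) * (if p' = q' then 1 else 0)
              + (if c = c' then (1:ℝ) else 0) * ((if p = p' then (1:ℝ) else 0) * (if q = q' then 1 else 0)
                + (if p = q' then (1:ℝ) else 0) * (if q = p' then 1 else 0))) := by
        refine Finset.sum_congr rfl fun p _ => Finset.sum_congr rfl fun q _ => ?_
        rw [← swap]
        refine Finset.sum_congr rfl fun c _ => Finset.sum_congr rfl fun p' _ =>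
          Finset.sum_congr rfl fun q' _ => Finset.sum_congr rfl fun c' _ => by ring
    _ = ∑ p, ∑ q, ∑ p', ∑ q',
          (a p * w q * (b p' * w q') * (1/(k:ℝ)^2)) *
            ((k:ℝ)^2 * ((if p = q then (1:ℝ) else 0) * (if p' = q' then 1 else 0))
              + k * ((if p = p' then (1:ℝ) else 0) * (if q = q' then 1 else 0)
                + (if p = q' then (1:ℝ) else 0) * (if q = p' then 1 else 0))) := by
        refine Finset.sum_congr rfl fun p _ => Finset.sum_congr rfl fun q _ =>
          Finset.sum_congr rfl fun p' _ => Finset.sum_congr rfl fun q' _ => ?_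
        exact hcc _ _ _
    _ = ∑ p, ∑ q, ∑ p', ∑ q',
          ((a p * w q * (b p' * w q')) * ((if p = q then (1:ℝ) else 0) * (if p' = q' then 1 else 0))
          + (1/(k:ℝ)) * (a p * w q * (b p' * w q')) *
              ((if p = p' then (1:ℝ) else 0) * (if q = q' then 1 else 0)
                + (if p = q' then (1:ℝ) else 0) * (if q = p' then 1 else 0))) := by
        have hps : ∀ u t1 t2 : ℝ,
            (u * (1/(k:ℝ)^2)) * ((k:ℝ)^2*t1 + (k:ℝ)*t2) = u*t1 + (1/(k:ℝ))*u*t2 := by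
          intro u t1 t2; field_simp
        exact Finset.sum_congr rfl fun p _ => Finset.sum_congr rfl fun q _ =>
          Finset.sum_congr rfl fun p' _ => Finset.sum_congr rfl fun q' _ => hps _ _ _
    _ = (∑ p, a p * w p) * (∑ p, b p * w p)
      + 1/k * ((∑ p, a p * w p) * (∑ p, b p * w p))
      + 1/k * (∑ p, a p * b p) * (∑ q, w q ^ 2) := by
        simp only [mul_add, Finset.sum_add_distrib, mul_ite, ite_mul, mul_zero, zero_mul,
          mul_one, one_mul, sum_ite_const, Finset.sum_ite_eq, Finset.sum_ite_eq',
          Finset.mem_univ, if_true, Finset.sum_const, Finset.card_univ, Fintype.card_fin,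
          nsmul_eq_mul]
        have hQ : (1/(k:ℝ) * ∑ p, a p * b p) * (∑ q, w q ^ 2)
            = ∑ p, ∑ q, 1/(k:ℝ) * (a p * b p * w q ^ 2) := by
          rw [mul_assoc, Finset.sum_mul_sum]
          simp only [Finset.mul_sum]
        rw [Finset.sum_mul_sum, hQ]
        simp only [Finset.mul_sum, ← Finset.sum_add_distrib]
        exact Finset.sum_congr rfl fun p _ => Finset.sum_congr rfl fun q _ => by ring

lemma sum_rot {α β γ N : Type*} [Fintype α] [Fintype β] [Fintype γ] [AddCommMonoid N]
    (F : α → β → γ → N) :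
    ∑ q : β, ∑ c : γ, ∑ p : α, F p q c = ∑ p : α, ∑ q : β, ∑ c : γ, F p q c := by
  rw [Finset.sum_comm]
  refine (Finset.sum_congr rfl fun c _ => Finset.sum_comm).trans ?_
  rw [Finset.sum_comm]
  exact Finset.sum_congr rfl fun p _ => Finset.sum_comm

/-- With `A` an `f × k` random matrix of independent entries with mean 0,
variance `1/k` and fourth moment `3/k²`, and `v = M * A * Aᵀ * Δw`, the covariance
matrix of `v` is `(1/k)(MΔw)(MΔw)ᵀ + (1/k)(MMᵀ)‖Δw‖²`. -/
theorem covariance_of_projection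
    {Ω : Type*} [MeasureSpace Ω] [IsProbabilityMeasure (volume : Measure Ω)]
    (f k : ℕ) (hk : 0 < k)
    (A : Ω → Matrix (Fin f) (Fin k) ℝ)
    (hmeas : ∀ i j, Measurable (fun ω => A ω i j))
    (hindep : iIndepFun
      (fun (p : Fin f × Fin k) ω => A ω p.1 p.2) volume)
    (hmean : ∀ i j, ∫ ω, A ω i j = 0)
    (hvar : ∀ i j, ∫ ω, (A ω i j) ^ 2 = 1 / k)
    (hfourth : ∀ i j, ∫ ω, (A ω i j) ^ 4 = 3 / (k : ℝ) ^ 2)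
    (hL4 : ∀ i j, MemLp (fun ω => A ω i j) 4 volume)
    (M : Matrix (Fin f) (Fin f) ℝ) (Δw : Fin f → ℝ)
    (v : Ω → Fin f → ℝ)
    (hv : ∀ ω, v ω = (M * A ω * (A ω)ᵀ).mulVec Δw) :
    ∀ i j, (∫ ω, v ω i * v ω j) - (∫ ω, v ω i) * (∫ ω, v ω j) =
      (1 / k) * (M.mulVec Δw i * M.mulVec Δw j)
        + (1 / k) * (M * Mᵀ) i j * (∑ l, (Δw l) ^ 2) := by
  intro i j
  have hkR : (k:ℝ) ≠ 0 := Nat.cast_ne_zero.mpr hk.ne'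
  -- expansion of v
  have hv1 : ∀ (ω : Ω) (i' : Fin f), v ω i'
      = ∑ x : Fin f × Fin f × Fin k,
          M i' x.1 * Δw x.2.1 * (A ω x.1 x.2.2 * A ω x.2.1 x.2.2) := by
    intro ω i'
    rw [hv ω]
    rw [Fintype.sum_prod_type]
    simp only [Fintype.sum_prod_type]
    simp only [Matrix.mulVec, Matrix.mul_apply, dotProduct, Matrix.transpose_apply,
      Finset.sum_mul, Finset.mul_sum]
    rw [show (∑ q : Fin f, ∑ c : Fin k, ∑ p : Fin f, M i' p * A ω p c * A ω q c * Δw q)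
        = ∑ q : Fin f, ∑ c : Fin k, ∑ p : Fin f,
            M i' p * Δw q * (A ω p c * A ω q c) from
      Finset.sum_congr rfl fun q _ => Finset.sum_congr rfl fun c _ =>
        Finset.sum_congr rfl fun p _ => by ring]
    exact sum_rot _
  have ibase2 : ∀ (r : ℝ) (p q : Fin f) (c : Fin k),
      Integrable (fun ω => r * (A ω p c * A ω q c)) volume :=
    fun r p q c => (integrable_mul2 (hL4 p c) (hL4 q c)).const_mul r
  have ibase4 : ∀ (r : ℝ) (p q p' q' : Fin f) (c c' : Fin k),
      Integrable (fun ω => r * (A ω p c * A ω q c * (A ω p' c' * A ω q' c'))) volume :=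
    fun r p q p' q' c c' =>
      (integrable_mul4 (hL4 p c) (hL4 q c) (hL4 p' c') (hL4 q' c')).const_mul r
  have hE1 : ∀ i' : Fin f, (∫ ω, v ω i') = M.mulVec Δw i' := by
    intro i'
    rw [show (fun ω => v ω i') = fun ω => ∑ x : Fin f × Fin f × Fin k,
        M i' x.1 * Δw x.2.1 * (A ω x.1 x.2.2 * A ω x.2.1 x.2.2) from
      funext fun ω => hv1 ω i']
    rw [integral_finset_sum _ (fun x _ => ibase2 _ _ _ _)]
    rw [Finset.sum_congr rfl fun x (_ : x ∈ Finset.univ) =>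
      (integral_const_mul (M i' x.1 * Δw x.2.1) _).trans
        (by rw [moment2 A hmeas hindep hmean hvar hL4 x.1 x.2.1 x.2.2])]
    simp only [Fintype.sum_prod_type, mul_ite, mul_zero, Finset.sum_ite_eq,
      Finset.mem_univ, if_true, Finset.sum_const, Finset.card_univ, Fintype.card_fin,
      nsmul_eq_mul, Matrix.mulVec, dotProduct]
    refine Finset.sum_congr rfl fun p _ => ?_
    field_simp
  have hE2 : (∫ ω, v ω i * v ω j)
      = ∑ x : Fin f × Fin f × Fin k, ∑ y : Fin f × Fin f × Fin k,
          (M i x.1 * Δw x.2.1 * (M j y.1 * Δw y.2.1)) *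
            (1/(k:ℝ)^2 * ((if x.1 = x.2.1 then 1 else 0) * (if y.1 = y.2.1 then 1 else 0)
              + (if x.2.2 = y.2.2 then 1 else 0) *
                ((if x.1 = y.1 then 1 else 0) * (if x.2.1 = y.2.1 then 1 else 0)
                + (if x.1 = y.2.1 then 1 else 0) * (if x.2.1 = y.1 then 1 else 0)))) := by
    rw [show (fun ω => v ω i * v ω j) = fun ω => ∑ x : Fin f × Fin f × Fin k,
        ∑ y : Fin f × Fin f × Fin k,
          (M i x.1 * Δw x.2.1 * (M j y.1 * Δw y.2.1)) *
            (A ω x.1 x.2.2 * A ω x.2.1 x.2.2 * (A ω y.1 y.2.2 * A ω y.2.1 y.2.2)) from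
      funext fun ω => by
        rw [hv1 ω i, hv1 ω j, Finset.sum_mul_sum]
        exact Finset.sum_congr rfl fun x _ => Finset.sum_congr rfl fun y _ => by ring]
    rw [integral_finset_sum _
      (fun x _ => integrable_finset_sum _ (fun y _ => ibase4 _ _ _ _ _ _ _))]
    refine Finset.sum_congr rfl fun x _ => ?_
    rw [integral_finset_sum _ (fun y _ => ibase4 _ _ _ _ _ _ _)]
    refine Finset.sum_congr rfl fun y _ => ?_
    rw [integral_const_mul,
      moment4 A hmeas hindep hmean hvar hfourth hL4 x.1 x.2.1 y.1 y.2.1 x.2.2 y.2.2]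
  rw [hE2, hE1 i, hE1 j]
  simp only [Fintype.sum_prod_type]
  rw [sum6 hk (M i) (M j) Δw]
  simp only [Matrix.mulVec, dotProduct, Matrix.mul_apply, Matrix.transpose_apply]
  ring
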